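/- Let C be a braided monoidal category and B a bimonoid in C. Then B admits an antipode (i.e., the bimonoid B underlies a Hopf monoid in C) if and only if its shear morphism sh_B := (id_B ⊗ m) ∘ α_{B,B,B} ∘ (Δ ⊗ id_B) : B ⊗ B → B ⊗ B is an isomorphism. -/

import Mathlib

open CategoryTheory MonoidalCategory

universe v u

variable {C : Type u} [Category.{v} C] [MonoidalCategory C] [BraidedCategory C]

/-- The shear morphism `(id_B ⊗ m) ∘ α ∘ (Δ ⊗ id_B) : B ⊗ B ⟶ B ⊗ B` of a bimonoid `B`. -/
noncomputable def Bimon_.shear (B : Bimon C) : B.X.X ⊗ B.X.X ⟶ B.X.X ⊗ B.X.X :=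
  ((ComonObj.comul (self := B.comon)).hom ▷ B.X.X) ≫ (α_ B.X.X B.X.X B.X.X).hom ≫ (B.X.X ◁ MonObj.mul (X := B.X.X))

noncomputable abbrev CategoryTheory.Comon.comul (B : Comon (Mon C)) : B.X ⟶ B.X ⊗ B.X := ComonObj.comul (self := B.comon)

noncomputable abbrev CategoryTheory.Comon.counit (B : Comon (Mon C)) : B.X ⟶ 𝟙_ (Mon C) := ComonObj.counit (self := B.comon)

abbrev CategoryTheory.Mon.mul (M : Mon C) : M.X ⊗ M.X ⟶ M.X := MonObj.mul (X := M.X)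

abbrev CategoryTheory.Mon.one (M : Mon C) : 𝟙_ C ⟶ M.X := MonObj.one (X := M.X)

theorem Mon_.one_mul (M : Mon C) : (M.one ▷ M.X) ≫ M.mul = (λ_ M.X).hom := MonObj.one_mul M.X

theorem Mon_.mul_one (M : Mon C) : (M.X ◁ M.one) ≫ M.mul = (ρ_ M.X).hom := MonObj.mul_one M.X

theorem Mon_.mul_assoc_flip (M : Mon C) :
    (M.X ◁ M.mul) ≫ M.mul = (α_ M.X M.X M.X).inv ≫ (M.mul ▷ M.X) ≫ M.mul :=
  MonObj.mul_assoc_flip (M := M.X)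

theorem Bimon_.comul_assoc_flip_hom_assoc (B : Bimon C) {Z : C} (h : (B.X.X ⊗ B.X.X) ⊗ B.X.X ⟶ Z) :
    B.comul.hom ≫ (B.comul.hom ▷ B.X.X) ≫ h =
      B.comul.hom ≫ (B.X.X ◁ B.comul.hom) ≫ (α_ B.X.X B.X.X B.X.X).inv ≫ h := by
  have e : B.comul.hom ≫ (B.comul.hom ▷ B.X.X) =
      B.comul.hom ≫ (B.X.X ◁ B.comul.hom) ≫ (α_ B.X.X B.X.X B.X.X).inv :=
    ComonObj.comul_assoc_flip B.X.X
  rw [← Category.assoc, e]; simp only [Category.assoc]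

theorem Bimon_.comul_counit_hom_assoc (B : Bimon C) {Z : C} (h : B.X.X ⊗ 𝟙_ C ⟶ Z) :
    B.comul.hom ≫ (B.X.X ◁ B.counit.hom) ≫ h = (ρ_ B.X.X).inv ≫ h := by
  have e : B.comul.hom ≫ (B.X.X ◁ B.counit.hom) = (ρ_ B.X.X).inv :=
    ComonObj.comul_counit B.X.X
  rw [← Category.assoc, e]

theorem Bimon_.counit_comul_hom_assoc (B : Bimon C) {Z : C} (h : 𝟙_ C ⊗ B.X.X ⟶ Z) :
    B.comul.hom ≫ (B.counit.hom ▷ B.X.X) ≫ h = (λ_ B.X.X).inv ≫ h := by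
  have e : B.comul.hom ≫ (B.counit.hom ▷ B.X.X) = (λ_ B.X.X).inv :=
    ComonObj.counit_comul B.X.X
  rw [← Category.assoc, e]

namespace ShearAux

variable (B : Bimon C)

/-! Type-normalized versions of general lemmas (the ambient versions produce
`(B.X ⊗ B.X).X` and `(𝟙_ (Mon_ C)).X`, which are only definitionally equal to
`B.X.X ⊗ B.X.X` and `𝟙_ C`). -/

theorem exchD {Y Z : C} (g : Y ⟶ Z) :
    (B.X.X ◁ g) ≫ (B.comul.hom ▷ Z) = (B.comul.hom ▷ Y) ≫ ((B.X.X ⊗ B.X.X) ◁ g) :=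
  whisker_exchange B.comul.hom g

theorem exchE {Y Z : C} (g : Y ⟶ Z) :
    (B.X.X ◁ g) ≫ (B.counit.hom ▷ Z) = (B.counit.hom ▷ Y) ≫ ((𝟙_ C) ◁ g) :=
  whisker_exchange B.counit.hom g

theorem natLeftD :
    B.comul.hom ▷ B.X.X ▷ B.X.X ≫ (α_ (B.X.X ⊗ B.X.X) B.X.X B.X.X).hom =
      (α_ B.X.X B.X.X B.X.X).hom ≫ B.comul.hom ▷ (B.X.X ⊗ B.X.X) :=
  associator_naturality_left _ _ _

theorem natLeftE :
    B.counit.hom ▷ B.X.X ▷ B.X.X ≫ (α_ (𝟙_ C) B.X.X B.X.X).hom =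
      (α_ B.X.X B.X.X B.X.X).hom ≫ B.counit.hom ▷ (B.X.X ⊗ B.X.X) :=
  associator_naturality_left _ _ _

theorem natMidE :
    (B.X.X ◁ B.counit.hom) ▷ B.X.X ≫ (α_ B.X.X (𝟙_ C) B.X.X).hom =
      (α_ B.X.X B.X.X B.X.X).hom ≫ B.X.X ◁ (B.counit.hom ▷ B.X.X) :=
  associator_naturality_middle _ _ _

theorem natMidD :
    (B.X.X ◁ B.comul.hom) ▷ B.X.X ≫ (α_ B.X.X (B.X.X ⊗ B.X.X) B.X.X).hom =
      (α_ B.X.X B.X.X B.X.X).hom ≫ B.X.X ◁ (B.comul.hom ▷ B.X.X) :=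
  associator_naturality_middle _ _ _

theorem runitInvD :
    (ρ_ B.X.X).inv ≫ B.comul.hom ▷ (𝟙_ C) = B.comul.hom ≫ (ρ_ (B.X.X ⊗ B.X.X)).inv :=
  (rightUnitor_inv_naturality _).symm

theorem runitInvE :
    (ρ_ B.X.X).inv ≫ B.counit.hom ▷ (𝟙_ C) = B.counit.hom ≫ (ρ_ (𝟙_ C)).inv :=
  (rightUnitor_inv_naturality _).symm

/-- `Φ f = (Δ ▷ X) ≫ α ≫ (X ◁ f)`. -/
noncomputable def Phi (f : B.X.X ⊗ B.X.X ⟶ B.X.X) : B.X.X ⊗ B.X.X ⟶ B.X.X ⊗ B.X.X :=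
  (B.comul.hom ▷ B.X.X) ≫ (α_ B.X.X B.X.X B.X.X).hom ≫ (B.X.X ◁ f)

/-- `w = x ↦ x ⊗ 1`. -/
noncomputable def w : B.X.X ⟶ B.X.X ⊗ B.X.X := (ρ_ B.X.X).inv ≫ (B.X.X ◁ B.X.one)

/-- `v = x ⊗ y ↦ ε(x) y`. -/
noncomputable def v : B.X.X ⊗ B.X.X ⟶ B.X.X := (B.counit.hom ▷ B.X.X) ≫ (λ_ B.X.X).hom

theorem shear_eq : (Bimon_.shear B) = Phi B B.X.mul := rfl

/-- `Φ f` is a morphism of left `B`-comodules. -/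
theorem comod (f : B.X.X ⊗ B.X.X ⟶ B.X.X) :
    Phi B f ≫ (B.comul.hom ▷ B.X.X) ≫ (α_ B.X.X B.X.X B.X.X).hom =
      (B.comul.hom ▷ B.X.X) ≫ (α_ B.X.X B.X.X B.X.X).hom ≫ (B.X.X ◁ Phi B f) := by
  simp only [Phi, Category.assoc]
  slice_lhs 3 4 => rw [exchD]
  slice_lhs 4 5 => rw [associator_naturality_right]
  slice_lhs 2 3 => rw [← natLeftD]
  slice_lhs 3 4 => rw [← pentagon]
  slice_lhs 1 3 =>
    rw [← comp_whiskerRight, ← comp_whiskerRight, Bimon_.comul_assoc_flip_hom_assoc B,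
      Iso.inv_hom_id, Category.comp_id, comp_whiskerRight]
  slice_lhs 2 3 => rw [natMidD]
  simp only [MonoidalCategory.whiskerLeft_comp, Category.assoc]

theorem comp_Phi (f g : B.X.X ⊗ B.X.X ⟶ B.X.X) :
    Phi B f ≫ Phi B g = Phi B (Phi B f ≫ g) :=
  calc Phi B f ≫ Phi B g
      = (Phi B f ≫ (B.comul.hom ▷ B.X.X) ≫ (α_ B.X.X B.X.X B.X.X).hom) ≫ (B.X.X ◁ g) := by
        simp only [Phi, Category.assoc]
    _ = ((B.comul.hom ▷ B.X.X) ≫ (α_ B.X.X B.X.X B.X.X).hom ≫ (B.X.X ◁ Phi B f)) ≫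
          (B.X.X ◁ g) := by rw [comod]
    _ = Phi B (Phi B f ≫ g) := by
        simp only [Phi, MonoidalCategory.whiskerLeft_comp, Category.assoc]

/-- `Φ v = 𝟙`. -/
theorem Phi_v : Phi B (v B) = 𝟙 _ := by
  simp only [Phi, v, MonoidalCategory.whiskerLeft_comp]
  slice_lhs 2 3 => rw [← natMidE]
  slice_lhs 3 4 => rw [triangle]
  slice_lhs 1 3 =>
    rw [← comp_whiskerRight, ← comp_whiskerRight, Bimon_.comul_counit_hom_assoc,
      Iso.inv_hom_id]
  simp

/-- `Φ f ≫ v = f`. -/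
theorem Phi_comp_v (f : B.X.X ⊗ B.X.X ⟶ B.X.X) : Phi B f ≫ v B = f := by
  simp only [Phi, v, Category.assoc]
  slice_lhs 3 4 => rw [exchE]
  slice_lhs 4 5 => rw [leftUnitor_naturality]
  slice_lhs 2 3 => rw [← natLeftE]
  slice_lhs 3 4 => rw [leftUnitor_tensor_hom, Iso.hom_inv_id_assoc]
  slice_lhs 1 3 =>
    rw [← comp_whiskerRight, ← comp_whiskerRight, Bimon_.counit_comul_hom_assoc,
      Iso.inv_hom_id]
  simp

/-- `w ≫ (Δ ▷ X) ≫ α = Δ ≫ (X ◁ w)`. -/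
theorem w_comul :
    w B ≫ (B.comul.hom ▷ B.X.X) ≫ (α_ B.X.X B.X.X B.X.X).hom =
      B.comul.hom ≫ (B.X.X ◁ w B) := by
  simp only [w, MonoidalCategory.whiskerLeft_comp, Category.assoc]
  slice_lhs 2 3 => rw [exchD]
  slice_lhs 1 2 => rw [runitInvD]
  slice_lhs 3 4 => rw [associator_naturality_right]
  slice_lhs 2 3 => rw [rightUnitor_tensor_inv, Category.assoc, Iso.inv_hom_id, Category.comp_id]

/-- `w ≫ Φ f = Δ ≫ (X ◁ (w ≫ f))`. -/
theorem w_Phi (f : B.X.X ⊗ B.X.X ⟶ B.X.X) :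
    w B ≫ Phi B f = B.comul.hom ≫ (B.X.X ◁ (w B ≫ f)) := by
  simp only [Phi, MonoidalCategory.whiskerLeft_comp]
  rw [← Category.assoc, ← Category.assoc, Category.assoc (w B), w_comul]
  simp

theorem w_mul : w B ≫ B.X.mul = 𝟙 B.X.X := by
  simp [w, Mon_.mul_one]

theorem w_shear : w B ≫ (Bimon_.shear B) = B.comul.hom := by
  rw [shear_eq, w_Phi, w_mul]; simp

/-- `(w ▷ X) ≫ α ≫ (X ◁ m) = 𝟙`. -/
theorem w_whiskerRight :
    (w B ▷ B.X.X) ≫ (α_ B.X.X B.X.X B.X.X).hom ≫ (B.X.X ◁ B.X.mul) = 𝟙 _ := by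
  simp only [w, comp_whiskerRight, Category.assoc]
  slice_lhs 2 3 => rw [associator_naturality_middle]
  slice_lhs 3 4 => rw [← MonoidalCategory.whiskerLeft_comp, Mon_.one_mul]
  rw [triangle, ← comp_whiskerRight, Iso.inv_hom_id, id_whiskerRight]

theorem w_v : w B ≫ v B = B.counit.hom ≫ B.X.one := by
  simp only [w, v, Category.assoc]
  slice_lhs 2 3 => rw [exchE]
  slice_lhs 1 2 => rw [runitInvE]
  slice_lhs 3 4 => rw [leftUnitor_naturality]
  rw [unitors_equal]
  simp

/-- `(v ▷ X) ≫ m = α ≫ (X ◁ m) ≫ v`. -/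
theorem v_mul :
    (v B ▷ B.X.X) ≫ B.X.mul =
      (α_ B.X.X B.X.X B.X.X).hom ≫ (B.X.X ◁ B.X.mul) ≫ v B := by
  simp only [v, comp_whiskerRight, Category.assoc]
  slice_rhs 2 3 => rw [exchE]
  slice_rhs 3 4 => rw [leftUnitor_naturality]
  slice_rhs 1 2 => rw [← natLeftE]
  slice_rhs 2 3 => rw [leftUnitor_tensor_hom, Iso.hom_inv_id_assoc]

/-- The shear morphism is a morphism of right `B`-modules. -/
theorem shear_module :
    ((Bimon_.shear B) ▷ B.X.X) ≫ (α_ B.X.X B.X.X B.X.X).hom ≫ (B.X.X ◁ B.X.mul) =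
      (α_ B.X.X B.X.X B.X.X).hom ≫ (B.X.X ◁ B.X.mul) ≫ (Bimon_.shear B) := by
  simp only [Bimon_.shear, comp_whiskerRight, Category.assoc]
  slice_rhs 2 3 => rw [exchD]
  slice_rhs 3 4 => rw [associator_naturality_right]
  slice_rhs 4 5 =>
    rw [← MonoidalCategory.whiskerLeft_comp, Mon_.mul_assoc_flip,
      MonoidalCategory.whiskerLeft_comp, MonoidalCategory.whiskerLeft_comp]
  slice_rhs 1 2 => rw [← natLeftD]
  slice_rhs 2 3 => rw [← pentagon]
  slice_rhs 3 5 => rw [← MonoidalCategory.whiskerLeft_comp, Iso.hom_inv_id,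
    MonoidalCategory.whiskerLeft_id, Category.comp_id]
  slice_rhs 3 4 => rw [← associator_naturality_middle]
  simp

/-- The inverse of the shear morphism is a morphism of right `B`-modules. -/
theorem inv_shear_module [IsIso (Bimon_.shear B)] :
    (inv (Bimon_.shear B) ▷ B.X.X) ≫ (α_ B.X.X B.X.X B.X.X).hom ≫ (B.X.X ◁ B.X.mul) =
      (α_ B.X.X B.X.X B.X.X).hom ≫ (B.X.X ◁ B.X.mul) ≫ inv (Bimon_.shear B) := by
  rw [← cancel_epi ((Bimon_.shear B) ▷ B.X.X)]
  slice_rhs 1 3 => rw [shear_module]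
  slice_lhs 1 2 => rw [← comp_whiskerRight, IsIso.hom_inv_id, id_whiskerRight]
  simp

/-- The inverse of the shear morphism is a morphism of left `B`-comodules. -/
theorem inv_shear_comod [IsIso (Bimon_.shear B)] :
    inv (Bimon_.shear B) ≫ (B.comul.hom ▷ B.X.X) ≫ (α_ B.X.X B.X.X B.X.X).hom =
      (B.comul.hom ▷ B.X.X) ≫ (α_ B.X.X B.X.X B.X.X).hom ≫ (B.X.X ◁ inv (Bimon_.shear B)) := by
  rw [← cancel_epi (Bimon_.shear B)]
  have h : (Bimon_.shear B) ≫ (B.comul.hom ▷ B.X.X) ≫ (α_ B.X.X B.X.X B.X.X).hom =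
      (B.comul.hom ▷ B.X.X) ≫ (α_ B.X.X B.X.X B.X.X).hom ≫ (B.X.X ◁ (Bimon_.shear B)) :=
    comod B B.X.mul
  slice_rhs 1 3 => rw [h]
  slice_rhs 3 4 =>
    rw [← MonoidalCategory.whiskerLeft_comp, IsIso.hom_inv_id, MonoidalCategory.whiskerLeft_id]
  simp

end ShearAux

open ShearAux

/-- A bimonoid `B` in a braided monoidal category admits an antipode (i.e. underlies a Hopf
monoid) if and only if its shear morphism is an isomorphism. -/
theorem Bimon_.exists_antipode_iff_isIso_shear (B : Bimon C) :
    (∃ S : B.X.X ⟶ B.X.X,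
        (ComonObj.comul (self := B.comon)).hom ≫ (S ▷ B.X.X) ≫ MonObj.mul (X := B.X.X) = (ComonObj.counit (self := B.comon)).hom ≫ MonObj.one (X := B.X.X) ∧
        (ComonObj.comul (self := B.comon)).hom ≫ (B.X.X ◁ S) ≫ MonObj.mul (X := B.X.X) = (ComonObj.counit (self := B.comon)).hom ≫ MonObj.one (X := B.X.X)) ↔
      IsIso (Bimon_.shear B) := by
  constructor
  · rintro ⟨S, hl, hr⟩
    -- The inverse of the shear morphism is `Φ ((S ▷ X) ≫ m)`.
    refine ⟨Phi B ((S ▷ B.X.X) ≫ B.X.mul), ?_, ?_⟩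
    · rw [shear_eq, comp_Phi, ← Phi_v]
      congr 1
      -- `Φ m ≫ (S ▷ X) ≫ m = v`
      simp only [Phi, v, Category.assoc]
      slice_lhs 3 4 => rw [whisker_exchange]
      slice_lhs 4 5 => rw [Mon_.mul_assoc_flip]
      slice_lhs 3 4 => rw [associator_inv_naturality_left]
      slice_lhs 2 3 => rw [Iso.hom_inv_id]
      simp only [Category.id_comp, Category.assoc]
      slice_lhs 1 3 => rw [← comp_whiskerRight, ← comp_whiskerRight, hl]
      rw [comp_whiskerRight, Category.assoc, Mon_.one_mul B.X]
    · rw [shear_eq, comp_Phi, ← Phi_v]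
      congr 1
      -- `Φ ((S ▷ X) ≫ m) ≫ m = v`
      simp only [Phi, v, MonoidalCategory.whiskerLeft_comp, Category.assoc]
      slice_lhs 4 5 => rw [Mon_.mul_assoc_flip]
      slice_lhs 3 4 => rw [associator_inv_naturality_middle]
      slice_lhs 2 3 => rw [Iso.hom_inv_id]
      simp only [Category.id_comp, Category.assoc]
      slice_lhs 1 3 => rw [← comp_whiskerRight, ← comp_whiskerRight, hr]
      rw [comp_whiskerRight, Category.assoc, Mon_.one_mul B.X]
  · intro h
    refine ⟨w B ≫ inv (Bimon_.shear B) ≫ v B, ?_, ?_⟩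
    · simp only [comp_whiskerRight, Category.assoc]
      slice_lhs 4 5 => rw [v_mul]
      slice_lhs 3 5 => rw [inv_shear_module]
      slice_lhs 2 4 => rw [w_whiskerRight]
      rw [Category.id_comp (inv (Bimon_.shear B)), ← w_shear, Category.assoc,
        IsIso.hom_inv_id_assoc (Bimon_.shear B) (v B)]
      exact w_v B
    · simp only [MonoidalCategory.whiskerLeft_comp, Category.assoc]
      slice_lhs 1 2 => rw [← w_comul]
      slice_lhs 2 4 => rw [← inv_shear_comod]
      have hv : (B.comul.hom ▷ B.X.X) ≫ (α_ B.X.X B.X.X B.X.X).hom ≫ (B.X.X ◁ v B) =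
          𝟙 (B.X.X ⊗ B.X.X) := Phi_v B
      slice_lhs 3 5 => rw [hv]
      have hm : B.X.mul = (Bimon_.shear B) ≫ v B := by rw [shear_eq]; exact (Phi_comp_v B B.X.mul).symm
      rw [Category.id_comp B.X.mul, hm, IsIso.inv_hom_id_assoc (Bimon_.shear B) (v B)]
      exact w_v B
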